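/- Let T : Y → X be a bounded linear operator between Banach spaces, K a weakly compact subset of Y with 0 ∈ K, and (x_n) a weakly null sequence in X with x_n ∈ T(K) for all n. Let q : Y → Z := Y/ker T be the quotient map and T̄ : Z → X the induced injective operator with T = T̄ q. Then there exists a weakly null sequence (z_n) in Z with x_n = T̄ z_n for all n. -/

import Mathlib

open Filter Topology Pointwise

noncomputable section

variable {X : Type*} [NormedAddCommGroup X] [NormedSpace ℝ X]

/-- The `(p,r)`-convex hull of a sequence `z`: all sums `∑ aₖ • zₖ` with `(aₖ)` in the
closed unit ball of `ℓ_r`. -/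
def prConv (r : ℝ) (z : ℕ → X) : Set X :=
  {x | ∃ a : ℕ → ℝ, Summable (fun k => |a k| ^ r) ∧ (∑' k, |a k| ^ r) ≤ 1 ∧
    HasSum (fun k => a k • z k) x}

/-- `z` is absolutely `p`-summable. -/
def MemLpSeq (p : ℝ) (z : ℕ → X) : Prop := Summable fun k => ‖z k‖ ^ p

/-- The `ℓ_p(X)` norm of a sequence. -/
def lpNorm (p : ℝ) (z : ℕ → X) : ℝ := (∑' k, ‖z k‖ ^ p) ^ (1 / p)

/-- `x` is a `(p,r)`-null sequence. -/
def IsPRNull (p r : ℝ) (x : ℕ → X) : Prop :=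
  ∀ ε > 0, ∃ z : ℕ → X, MemLpSeq p z ∧ lpNorm p z ≤ ε ∧
    ∃ N : ℕ, ∀ n ≥ N, x n ∈ prConv r z

/-- `z` is weakly `p`-summable with weak `ℓ_p` norm at most `C`. -/
def WeakLpBound (p : ℝ) (z : ℕ → X) (C : ℝ) : Prop :=
  ∀ f : X →L[ℝ] ℝ, ‖f‖ ≤ 1 →
    Summable (fun k => |f (z k)| ^ p) ∧ (∑' k, |f (z k)| ^ p) ≤ C ^ p

/-- `z` is weakly `p`-summable. -/
def MemWeakLpSeq (p : ℝ) (z : ℕ → X) : Prop := ∃ C, 0 ≤ C ∧ WeakLpBound p z C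

/-- `z` is unconditionally `p`-summable: weakly `p`-summable with tails tending to `0`
in the weak `ℓ_p` norm. -/
def MemUncondLpSeq (p : ℝ) (z : ℕ → X) : Prop :=
  MemWeakLpSeq p z ∧ ∀ ε > 0, ∃ N : ℕ, WeakLpBound p (fun k => z (k + N)) ε

/-- Key step of Proposition 4.4(b): if `T = T̄ ∘ q` with `q` the (surjective) quotient map
and `T̄` injective, `K` weakly compact with `0 ∈ K`, and `(xₙ)` weakly null with
`xₙ ∈ T(K)`, then there is a weakly null sequence `(zₙ)` with `xₙ = T̄ zₙ`. -/
theorem weakly_null_lifts [CompleteSpace X] {Y Z : Type*} [NormedAddCommGroup Y]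
    [NormedSpace ℝ Y] [CompleteSpace Y] [NormedAddCommGroup Z] [NormedSpace ℝ Z]
    [CompleteSpace Z] (T : Y →L[ℝ] X) (q : Y →L[ℝ] Z) (Tbar : Z →L[ℝ] X)
    (hq : Function.Surjective q) (hTbar : Function.Injective Tbar)
    (hfact : ∀ v, T v = Tbar (q v)) (K : Set Y) (hK : IsCompact (toWeakSpace ℝ Y '' K))
    (h0K : (0 : Y) ∈ K) (x : ℕ → X) (hxK : ∀ n, x n ∈ T '' K)
    (hx : ∀ f : X →L[ℝ] ℝ, Tendsto (fun n => f (x n)) atTop (nhds 0)) :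
    ∃ z : ℕ → Z, (∀ g : Z →L[ℝ] ℝ, Tendsto (fun n => g (z n)) atTop (nhds 0)) ∧
      ∀ n, x n = Tbar (z n) := by
  
  classical
  choose k hkK hkx using hxK
  refine ⟨fun n => q (k n), ?_, fun n => by rw [← hkx n, hfact]⟩
  -- injectivity of the dual pairings
  have hinjX : Function.Injective ((topDualPairing ℝ X).flip) := by
    intro a b h
    rw [NormedSpace.eq_iff_forall_dual_eq ℝ]
    intro g
    exact congrArg (fun φ => φ g) h
  have hinjZ : Function.Injective ((topDualPairing ℝ Z).flip) := by
    intro a b h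
    rw [NormedSpace.eq_iff_forall_dual_eq ℝ]
    intro g
    exact congrArg (fun φ => φ g) h
  have hT2X : T2Space (WeakSpace ℝ X) := (WeakBilin.isEmbedding hinjX).t2Space
  -- the compact set S = q(K) in the weak topology of Z
  set S : Set (WeakSpace ℝ Z) := WeakSpace.map q '' (toWeakSpace ℝ Y '' K) with hS
  have hScompact : IsCompact S := hK.image (WeakSpace.map q).continuous
  set u : ℕ → WeakSpace ℝ Z := fun n => toWeakSpace ℝ Z (q (k n)) with hu
  have humem : ∀ n, u n ∈ S := fun n => ⟨toWeakSpace ℝ Y (k n), ⟨k n, hkK n, rfl⟩, rfl⟩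
  -- x tends weakly to 0
  have hxw : Tendsto (fun n => toWeakSpace ℝ X (x n)) atTop (𝓝 (toWeakSpace ℝ X 0)) := by
    apply (WeakBilin.tendsto_iff_forall_eval_tendsto _ hinjX).2
    intro f
    show Tendsto (fun n => f (x n)) atTop (𝓝 (f 0))
    rw [map_zero]
    exact hx f
  -- main convergence in the weak topology of Z
  have hmain : Tendsto u atTop (𝓝 (toWeakSpace ℝ Z 0)) := by
    apply hScompact.tendsto_nhds_of_unique_mapClusterPt (Filter.Eventually.of_forall humem)
    intro c _ hc
    have hccomp : MapClusterPt (WeakSpace.map Tbar c) atTop (WeakSpace.map Tbar ∘ u) :=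
      hc.continuousAt_comp (WeakSpace.map Tbar).continuous.continuousAt
    have hEq : (WeakSpace.map Tbar ∘ u) = fun n => toWeakSpace ℝ X (x n) := by
      funext n
      show toWeakSpace ℝ X (Tbar (q (k n))) = toWeakSpace ℝ X (x n)
      rw [← hfact, hkx n]
    rw [hEq] at hccomp
    have h0 : WeakSpace.map Tbar c = toWeakSpace ℝ X 0 := by
      exact eq_of_nhds_neBot (hccomp.clusterPt.mono hxw)
    have : Tbar ((toWeakSpace ℝ Z).symm c) = Tbar 0 := by
      have h1 : (toWeakSpace ℝ X).symm (WeakSpace.map Tbar c) = (toWeakSpace ℝ X).symm (toWeakSpace ℝ X 0) :=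
        congrArg _ h0
      rw [map_zero]
      exact h1
    have hc0 : (toWeakSpace ℝ Z).symm c = 0 := hTbar this
    calc c = toWeakSpace ℝ Z ((toWeakSpace ℝ Z).symm c) := ((toWeakSpace ℝ Z).apply_symm_apply c).symm
    _ = toWeakSpace ℝ Z 0 := by rw [hc0]
  -- conclude for each functional g
  intro g
  have hcont : Continuous fun z : WeakSpace ℝ Z => ((topDualPairing ℝ Z).flip z) g :=
    WeakBilin.eval_continuous _ g
  have := (hcont.continuousAt.tendsto.comp hmain)
  have hz : ((topDualPairing ℝ Z).flip (toWeakSpace ℝ Z 0)) g = 0 := by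
    show g 0 = 0
    exact map_zero g
  rw [hz] at this
  exact this
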